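/- Let H be a complex Hilbert space, X a compact Hausdorff space, and ι : C(X) → B(H) an injective unital *-homomorphism whose range is contained in ℂ·1 + K(H), the set of operators of the form λ·1 + k with λ ∈ ℂ and k compact. Then there exists a unital *-homomorphism Ψ : ℓ∞(X) → B(H) such that Ψ(f) = ι(f) for every f ∈ C(X), i.e., Ψ composed with the natural inclusion C(X) ⊆ ℓ∞(X) equals ι. -/

import Mathlib

open scoped ENNReal

/-- The canonical inclusion of `C(X)` into `ℓ∞(X)` for a compact Hausdorff space `X`,
sending a continuous function to the corresponding bounded function. -/
noncomputable def inclCLinf {X : Type*} [TopologicalSpace X] [CompactSpace X]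
    (f : C(X, ℂ)) : lp (fun _ : X => ℂ) ∞ :=
  ⟨fun x => f x, memℓp_infty (isCompact_range ((map_continuous f).norm)).bddAbove⟩

open scoped InnerProductSpace ComplexConjugate Classical

section IndCM
variable {X : Type*} [TopologicalSpace X] [T1Space X]

/-- The indicator continuous map of an isolated point. -/
noncomputable def indCM (x : X) (_hx : IsOpen ({x} : Set X)) : C(X, ℂ) where
  toFun y := if y = x then 1 else 0
  continuous_toFun := by
    rw [continuous_def]
    intro s _
    rcases Decidable.em ((1 : ℂ) ∈ s) with h1 | h1 <;>
      rcases Decidable.em ((0 : ℂ) ∈ s) with h0 | h0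
    · have : (fun y => if y = x then (1 : ℂ) else 0) ⁻¹' s = Set.univ := by
        ext y; simp only [Set.mem_preimage, Set.mem_univ, iff_true]
        split <;> assumption
      rw [this]; exact isOpen_univ
    · have : (fun y => if y = x then (1 : ℂ) else 0) ⁻¹' s = {x} := by
        ext y; simp only [Set.mem_preimage, Set.mem_singleton_iff]
        split <;> simp_all
      rw [this]; exact _hx
    · have : (fun y => if y = x then (1 : ℂ) else 0) ⁻¹' s = {x}ᶜ := by
        ext y; simp only [Set.mem_preimage, Set.mem_compl_iff, Set.mem_singleton_iff]
        split <;> simp_all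
      rw [this]; exact isClosed_singleton.isOpen_compl
    · have : (fun y => if y = x then (1 : ℂ) else 0) ⁻¹' s = ∅ := by
        ext y; simp only [Set.mem_preimage, Set.mem_empty_iff_false, iff_false]
        split <;> assumption
      rw [this]; exact isOpen_empty

@[simp] lemma indCM_apply (x : X) (hx) (y : X) : indCM x hx y = if y = x then 1 else 0 := rfl

lemma indCM_mul_ne {x y : X} (hx) (hy) (hxy : x ≠ y) :
    indCM x hx * indCM y hy = 0 := by
  ext z
  simp only [ContinuousMap.mul_apply, indCM_apply, ContinuousMap.zero_apply]
  split_ifs with h1 h2 <;> simp_all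

lemma indCM_mul_self (x : X) (hx) : indCM x hx * indCM x hx = indCM x hx := by
  ext z
  simp only [ContinuousMap.mul_apply, indCM_apply]
  split_ifs <;> simp

lemma star_indCM (x : X) (hx) : star (indCM x hx) = indCM x hx := by
  ext z
  simp only [ContinuousMap.star_apply, indCM_apply]
  split_ifs <;> simp

end IndCM

section Pyth
variable {H : Type*} [NormedAddCommGroup H] [InnerProductSpace ℂ H]

lemma pyth_finset {ι : Type*} (s : Finset ι) (v : ι → H)
    (hv : ∀ i ∈ s, ∀ j ∈ s, i ≠ j → ⟪v i, v j⟫_ℂ = 0) :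
    ‖∑ i ∈ s, v i‖ ^ 2 = ∑ i ∈ s, ‖v i‖ ^ 2 := by
  have h1 : ⟪∑ i ∈ s, v i, ∑ j ∈ s, v j⟫_ℂ = ∑ i ∈ s, ⟪v i, v i⟫_ℂ := by
    rw [sum_inner]
    refine Finset.sum_congr rfl fun i hi => ?_
    rw [inner_sum]
    exact Finset.sum_eq_single i (fun j hj hne => hv i hi j hj (Ne.symm hne))
      (fun h => absurd hi h)
  have h2 := congrArg RCLike.re h1
  rw [map_sum] at h2
  rw [← inner_self_eq_norm_sq (𝕜 := ℂ), h2]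
  exact Finset.sum_congr rfl fun i _ => inner_self_eq_norm_sq (𝕜 := ℂ) (v i)

end Pyth



section OrthProj
variable {H : Type*} [NormedAddCommGroup H] [InnerProductSpace ℂ H] [CompleteSpace H]
variable {D : Type*} (P : D → H →L[ℂ] H)

section
variable (hstar : ∀ x, star (P x) = P x)
  (hmul : ∀ x y : D, x ≠ y → P x * P y = 0)
  (hidem : ∀ x, P x * P x = P x)

include hstar in
lemma P_inner_move (x : D) (ξ η : H) : ⟪P x ξ, η⟫_ℂ = ⟪ξ, P x η⟫_ℂ := by
  have h := ContinuousLinearMap.adjoint_inner_left (P x) η ξ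
  rwa [← ContinuousLinearMap.star_eq_adjoint, hstar] at h

include hstar hmul in
lemma P_orth {x y : D} (hxy : x ≠ y) (ξ η : H) : ⟪P x ξ, P y η⟫_ℂ = 0 := by
  rw [P_inner_move P hstar]
  have : P x (P y η) = (P x * P y) η := rfl
  rw [this, hmul x y hxy]
  simp

include hstar hmul hidem in
lemma bessel_P (ξ : H) (s : Finset D) : ∑ x ∈ s, ‖P x ξ‖ ^ 2 ≤ ‖ξ‖ ^ 2 := by
  set Q : H →L[ℂ] H := ∑ x ∈ s, P x with hQdef
  have hQapp : ∀ η, Q η = ∑ x ∈ s, P x η := by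
    intro η; rw [hQdef]; exact ContinuousLinearMap.sum_apply _ _ _
  have hpyth : ‖Q ξ‖ ^ 2 = ∑ x ∈ s, ‖P x ξ‖ ^ 2 := by
    rw [hQapp]
    exact pyth_finset s _ fun i _ j _ hij => P_orth P hstar hmul hij ξ ξ
  have hQQ : Q (Q ξ) = Q ξ := by
    have hmm : Q * Q = Q := by
      rw [hQdef, Finset.sum_mul_sum]
      refine Finset.sum_congr rfl fun i hi => ?_
      rw [Finset.sum_eq_single i (fun j _ hne => hmul i j (Ne.symm hne))
        (fun h => absurd hi h)]
      exact hidem i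
    calc Q (Q ξ) = (Q * Q) ξ := rfl
    _ = Q ξ := by rw [hmm]
  have hQstar : star Q = Q := by
    rw [hQdef, star_sum]
    exact Finset.sum_congr rfl fun i _ => hstar i
  have hle : ‖Q ξ‖ ^ 2 ≤ ‖ξ‖ * ‖Q ξ‖ := by
    have h1 : (‖Q ξ‖ : ℝ) ^ 2 = RCLike.re ⟪Q ξ, Q ξ⟫_ℂ :=
      (inner_self_eq_norm_sq (𝕜 := ℂ) _).symm
    have h2 : ⟪Q ξ, Q ξ⟫_ℂ = ⟪ξ, Q (Q ξ)⟫_ℂ := by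
      have h := ContinuousLinearMap.adjoint_inner_left Q (Q ξ) ξ
      rwa [← ContinuousLinearMap.star_eq_adjoint, hQstar] at h
    rw [h1, h2, hQQ]
    exact re_inner_le_norm _ _
  rw [← hpyth]
  nlinarith [norm_nonneg (Q ξ), norm_nonneg ξ, sq_nonneg (‖Q ξ‖ - ‖ξ‖)]

include hstar hmul hidem in
lemma summable_sq_P (ξ : H) : Summable fun x : D => ‖P x ξ‖ ^ 2 :=
  summable_of_sum_le (fun x => sq_nonneg _) (fun s => bessel_P P hstar hmul hidem ξ s)

include hstar hmul hidem in
lemma summable_smul_P (ξ : H) (c : D → ℂ) (M : ℝ) (hM : ∀ x, ‖c x‖ ≤ M) :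
    Summable fun x : D => c x • P x ξ := by
  rw [summable_iff_vanishing_norm]
  intro ε hε
  have hsum : Summable fun x : D => ‖P x ξ‖ ^ 2 := summable_sq_P P hstar hmul hidem ξ
  obtain ⟨s, hs⟩ := summable_iff_vanishing_norm.mp hsum (ε ^ 2 / (M ^ 2 + 1))
    (by positivity)
  refine ⟨s, fun t ht => ?_⟩
  have h1 : ‖∑ x ∈ t, c x • P x ξ‖ ^ 2 = ∑ x ∈ t, ‖c x • P x ξ‖ ^ 2 :=
    pyth_finset t _ fun i _ j _ hij => by
      rw [inner_smul_left, inner_smul_right, P_orth P hstar hmul hij ξ ξ]; ring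
  have h2 : ∑ x ∈ t, ‖c x • P x ξ‖ ^ 2 ≤ (M ^ 2 + 1) * ∑ x ∈ t, ‖P x ξ‖ ^ 2 := by
    rw [Finset.mul_sum]
    refine Finset.sum_le_sum fun i _ => ?_
    rw [norm_smul, mul_pow]
    have hci : ‖c i‖ ^ 2 ≤ M ^ 2 + 1 := by
      nlinarith [hM i, norm_nonneg (c i)]
    nlinarith [sq_nonneg (‖P i ξ‖)]
  have h3 := hs t ht
  rw [Real.norm_eq_abs, abs_of_nonneg (Finset.sum_nonneg fun i _ => sq_nonneg _)] at h3
  have h4 : ‖∑ x ∈ t, c x • P x ξ‖ ^ 2 < ε ^ 2 := by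
    have hM1 : (0:ℝ) < M ^ 2 + 1 := by positivity
    calc ‖∑ x ∈ t, c x • P x ξ‖ ^ 2 ≤ (M ^ 2 + 1) * ∑ x ∈ t, ‖P x ξ‖ ^ 2 := h1 ▸ h2
    _ < (M ^ 2 + 1) * (ε ^ 2 / (M ^ 2 + 1)) := by
        apply mul_lt_mul_of_pos_left h3 hM1
    _ = ε ^ 2 := by field_simp
  nlinarith [norm_nonneg (∑ x ∈ t, c x • P x ξ)]

include hstar hmul hidem in
lemma norm_tsum_smul_P_le (ξ : H) (c : D → ℂ) (M : ℝ) (hM : ∀ x, ‖c x‖ ≤ M)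
    (hM0 : 0 ≤ M) : ‖∑' x : D, c x • P x ξ‖ ≤ M * ‖ξ‖ := by
  have hs := summable_smul_P P hstar hmul hidem ξ c M hM
  have ht : Filter.Tendsto (fun s : Finset D => ‖∑ x ∈ s, c x • P x ξ‖)
      Filter.atTop (nhds ‖∑' x : D, c x • P x ξ‖) := hs.hasSum.norm
  refine le_of_tendsto ht (Filter.Eventually.of_forall fun s => ?_)
  have h1 : ‖∑ x ∈ s, c x • P x ξ‖ ^ 2 = ∑ x ∈ s, ‖c x • P x ξ‖ ^ 2 :=
    pyth_finset s _ fun i _ j _ hij => by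
      rw [inner_smul_left, inner_smul_right, P_orth P hstar hmul hij ξ ξ]; ring
  have h2 : ∑ x ∈ s, ‖c x • P x ξ‖ ^ 2 ≤ M ^ 2 * ∑ x ∈ s, ‖P x ξ‖ ^ 2 := by
    rw [Finset.mul_sum]
    refine Finset.sum_le_sum fun i _ => ?_
    rw [norm_smul, mul_pow]
    have : ‖c i‖ ^ 2 ≤ M ^ 2 := pow_le_pow_left₀ (norm_nonneg _) (hM i) 2
    nlinarith [sq_nonneg (‖P i ξ‖)]
  have h3 : ∑ x ∈ s, ‖P x ξ‖ ^ 2 ≤ ‖ξ‖ ^ 2 := bessel_P P hstar hmul hidem ξ s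
  refine le_of_pow_le_pow_left₀ two_ne_zero (by positivity) ?_
  calc ‖∑ x ∈ s, c x • P x ξ‖ ^ 2 ≤ M ^ 2 * ∑ x ∈ s, ‖P x ξ‖ ^ 2 := h1 ▸ h2
  _ ≤ M ^ 2 * ‖ξ‖ ^ 2 := by nlinarith [sq_nonneg M]
  _ = (M * ‖ξ‖) ^ 2 := by ring

include hstar hmul hidem in
lemma P_apply_tsum (ξ : H) (c : D → ℂ) (M : ℝ) (hM : ∀ x, ‖c x‖ ≤ M) (y : D) :
    P y (∑' x : D, c x • P x ξ) = c y • P y ξ := by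
  rw [ContinuousLinearMap.map_tsum (P y) (summable_smul_P P hstar hmul hidem ξ c M hM)]
  have hterm : ∀ x : D, P y (c x • P x ξ) = if x = y then c y • P y ξ else 0 := by
    intro x
    rw [ContinuousLinearMap.map_smul]
    by_cases h : x = y
    · subst h
      have : P x (P x ξ) = (P x * P x) ξ := rfl
      rw [this, hidem, if_pos rfl]
    · have : P y (P x ξ) = (P y * P x) ξ := rfl
      rw [this, hmul y x (Ne.symm h), if_neg h]
      simp
  rw [tsum_congr hterm, tsum_eq_single y (fun x hx => if_neg hx), if_pos rfl]

end
end OrthProj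

section InnerTsum
variable {H : Type*} [NormedAddCommGroup H] [InnerProductSpace ℂ H] [CompleteSpace H]

lemma inner_tsum_left {ι : Type*} {f : ι → H} (hf : Summable f) (η : H) :
    ⟪∑' x, f x, η⟫_ℂ = ∑' x, ⟪f x, η⟫_ℂ := by
  have h2 : ⟪η, ∑' x, f x⟫_ℂ = ∑' x, ⟪η, f x⟫_ℂ :=
    ContinuousLinearMap.map_tsum (innerSL ℂ η) hf
  calc ⟪∑' x, f x, η⟫_ℂ = starRingEnd ℂ ⟪η, ∑' x, f x⟫_ℂ := (inner_conj_symm _ _).symm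
  _ = starRingEnd ℂ (∑' x, ⟪η, f x⟫_ℂ) := by rw [h2]
  _ = ∑' x, starRingEnd ℂ ⟪η, f x⟫_ℂ := by
      rw [show (starRingEnd ℂ (∑' x, ⟪η, f x⟫_ℂ)) = star (∑' x, ⟪η, f x⟫_ℂ) from rfl, tsum_star]
      rfl
  _ = ∑' x, ⟪f x, η⟫_ℂ := tsum_congr fun x => inner_conj_symm _ _

lemma inner_tsum_right {ι : Type*} {f : ι → H} (hf : Summable f) (η : H) :
    ⟪η, ∑' x, f x⟫_ℂ = ∑' x, ⟪η, f x⟫_ℂ :=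
  ContinuousLinearMap.map_tsum (innerSL ℂ η) hf

end InnerTsum

set_option maxHeartbeats 2000000 in
theorem construction {H : Type*} [NormedAddCommGroup H] [InnerProductSpace ℂ H] [CompleteSpace H]
    {X : Type*} [TopologicalSpace X] [CompactSpace X] [T2Space X]
    (ι : C(X, ℂ) →⋆ₐ[ℂ] (H →L[ℂ] H)) (x₀ : X)
    (hiso : ∀ x : X, x ≠ x₀ → IsOpen ({x} : Set X)) :
    ∃ Ψ : lp (fun _ : X => ℂ) ∞ →⋆ₐ[ℂ] (H →L[ℂ] H),
      ∀ f : C(X, ℂ), Ψ (inclCLinf f) = ι f := by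
  classical
  let e : {x : X // x ≠ x₀} → C(X, ℂ) := fun x => indCM x.1 (hiso x.1 x.2)
  let P : {x : X // x ≠ x₀} → H →L[ℂ] H := fun x => ι (e x)
  have hstar : ∀ x, star (P x) = P x := fun x => by
    show star (ι (e x)) = ι (e x)
    rw [← map_star, star_indCM]
  have hPmul : ∀ x y, x ≠ y → P x * P y = 0 := fun x y hxy => by
    have hne : x.1 ≠ y.1 := fun h => hxy (Subtype.ext h)
    show ι (e x) * ι (e y) = 0
    rw [← map_mul, indCM_mul_ne _ _ hne, map_zero]
  have hidem : ∀ x, P x * P x = P x := fun x => by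
    show ι (e x) * ι (e x) = ι (e x)
    rw [← map_mul, indCM_mul_self]
  -- coefficients
  let C : lp (fun _ : X => ℂ) ∞ → {x : X // x ≠ x₀} → ℂ := fun g x => g x.1 - g x₀
  have hC : ∀ g x, ‖C g x‖ ≤ 2 * ‖g‖ := by
    intro g x
    calc ‖g x.1 - g x₀‖ ≤ ‖g x.1‖ + ‖g x₀‖ := norm_sub_le _ _
    _ ≤ ‖g‖ + ‖g‖ := add_le_add (lp.norm_apply_le_norm ENNReal.top_ne_zero g x.1)
        (lp.norm_apply_le_norm ENNReal.top_ne_zero g x₀)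
    _ = 2 * ‖g‖ := by ring
  have hsumm : ∀ (c : {x : X // x ≠ x₀} → ℂ) (M : ℝ), (∀ x, ‖c x‖ ≤ M) → ∀ ξ : H,
      Summable fun x => c x • P x ξ := fun c M hM ξ =>
    summable_smul_P P hstar hPmul hidem ξ c M hM
  have hsummC : ∀ g (ξ : H), Summable fun x => C g x • P x ξ := fun g ξ =>
    hsumm (C g) (2 * ‖g‖) (hC g) ξ
  have hsmul_tsum : ∀ (a : ℂ) (c : {x : X // x ≠ x₀} → ℂ) (M : ℝ) (hM : ∀ x, ‖c x‖ ≤ M)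
      (ξ : H), a • ∑' x, c x • P x ξ = ∑' x, (a * c x) • P x ξ := by
    intro a c M hM ξ
    rw [← Summable.tsum_const_smul a (hsumm c M hM ξ)]
    exact tsum_congr fun x => smul_smul a (c x) (P x ξ)
  -- the underlying continuous linear maps
  let Ψ₀ : lp (fun _ : X => ℂ) ∞ → H →L[ℂ] H := fun g =>
    LinearMap.mkContinuous
      { toFun := fun ξ => g x₀ • ξ + ∑' x, C g x • P x ξ
        map_add' := fun ξ η => by
          dsimp only
          have h1 : ∀ x, C g x • P x (ξ + η) = C g x • P x ξ + C g x • P x η := fun x => by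
            rw [map_add, smul_add]
          rw [smul_add, tsum_congr h1, Summable.tsum_add (hsummC g ξ) (hsummC g η)]
          abel
        map_smul' := fun a ξ => by
          simp only [RingHom.id_apply]
          have h1 : ∀ x, C g x • P x (a • ξ) = (C g x * a) • P x ξ := fun x => by
            rw [map_smul, smul_smul]
          have h2 : ∀ x, (C g x * a) • P x ξ = (a * C g x) • P x ξ := fun x => by
            rw [mul_comm]
          rw [tsum_congr h1, tsum_congr h2, ← hsmul_tsum a (C g) (2 * ‖g‖) (hC g) ξ,
            smul_add, smul_comm]
      } (3 * ‖g‖)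
      (by
        intro ξ
        have h1 : ‖g x₀ • ξ‖ ≤ ‖g‖ * ‖ξ‖ := by
          rw [norm_smul]
          exact mul_le_mul_of_nonneg_right (lp.norm_apply_le_norm ENNReal.top_ne_zero g x₀)
            (norm_nonneg ξ)
        have h2 : ‖∑' x, C g x • P x ξ‖ ≤ 2 * ‖g‖ * ‖ξ‖ :=
          norm_tsum_smul_P_le P hstar hPmul hidem ξ (C g) (2 * ‖g‖) (hC g) (by positivity)
        calc ‖g x₀ • ξ + ∑' x, C g x • P x ξ‖ ≤ ‖g x₀ • ξ‖ + ‖∑' x, C g x • P x ξ‖ :=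
            norm_add_le _ _
        _ ≤ ‖g‖ * ‖ξ‖ + 2 * ‖g‖ * ‖ξ‖ := add_le_add h1 h2
        _ = 3 * ‖g‖ * ‖ξ‖ := by ring)
  have hΨ₀app : ∀ g (ξ : H), Ψ₀ g ξ = g x₀ • ξ + ∑' x, C g x • P x ξ := fun g ξ => rfl
  have hΨ₀norm : ∀ g, ‖Ψ₀ g‖ ≤ 3 * ‖g‖ := fun g =>
    LinearMap.mkContinuous_norm_le _ (by positivity) _
  -- coordinate lemmas
  have hadd_co : ∀ (g h : lp (fun _ : X => ℂ) ∞) (y : X), (g + h) y = g y + h y :=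
    fun g h y => by rw [lp.coeFn_add]; rfl
  have hsmul_co : ∀ (a : ℂ) (g : lp (fun _ : X => ℂ) ∞) (y : X), (a • g) y = a * g y :=
    fun a g y => by rw [lp.coeFn_smul]; rfl
  have hmul_co : ∀ (g h : lp (fun _ : X => ℂ) ∞) (y : X), (g * h) y = g y * h y :=
    fun g h y => by rw [lp.infty_coeFn_mul]; rfl
  have hone_co : ∀ y : X, (1 : lp (fun _ : X => ℂ) ∞) y = 1 :=
    fun y => by rw [lp.infty_coeFn_one]; rfl
  have hstar_co : ∀ (g : lp (fun _ : X => ℂ) ∞) (y : X), (star g) y = starRingEnd ℂ (g y) :=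
    fun g y => by rw [lp.coeFn_star]; rfl
  -- algebra laws
  have hΨadd : ∀ g h, Ψ₀ (g + h) = Ψ₀ g + Ψ₀ h := by
    intro g h
    ext ξ
    rw [ContinuousLinearMap.add_apply, hΨ₀app, hΨ₀app, hΨ₀app]
    have h1 : ∀ x, C (g + h) x • P x ξ = C g x • P x ξ + C h x • P x ξ := by
      intro x
      have hb : C (g + h) x = C g x + C h x := by
        show (g + h) x.1 - (g + h) x₀ = (g x.1 - g x₀) + (h x.1 - h x₀)
        rw [hadd_co g h x.1, hadd_co g h x₀]; ring
      rw [hb, add_smul]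
    rw [tsum_congr h1, Summable.tsum_add (hsummC g ξ) (hsummC h ξ), hadd_co g h x₀, add_smul]
    abel
  have hΨsmul : ∀ (a : ℂ) g, Ψ₀ (a • g) = a • Ψ₀ g := by
    intro a g
    ext ξ
    rw [ContinuousLinearMap.smul_apply, hΨ₀app, hΨ₀app]
    have h1 : ∀ x, C (a • g) x • P x ξ = (a * C g x) • P x ξ := by
      intro x
      have hb : C (a • g) x = a * C g x := by
        show (a • g) x.1 - (a • g) x₀ = a * (g x.1 - g x₀)
        rw [hsmul_co, hsmul_co]; ring
      rw [hb]
    rw [tsum_congr h1, ← hsmul_tsum a (C g) (2 * ‖g‖) (hC g) ξ, hsmul_co a g x₀, smul_add,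
      mul_smul]
  have hΨone : Ψ₀ 1 = 1 := by
    ext ξ
    rw [hΨ₀app]
    have h1 : ∀ x, C (1 : lp (fun _ : X => ℂ) ∞) x • P x ξ = 0 := by
      intro x
      show ((1 : lp (fun _ : X => ℂ) ∞) x.1 - (1 : lp (fun _ : X => ℂ) ∞) x₀) • P x ξ = 0
      rw [hone_co, hone_co, sub_self, zero_smul]
    rw [tsum_congr h1, tsum_zero, add_zero, hone_co, one_smul, ContinuousLinearMap.one_apply]
  have hΨzero : Ψ₀ 0 = 0 := by
    ext ξ
    rw [hΨ₀app]
    have hz : ∀ y : X, (0 : lp (fun _ : X => ℂ) ∞) y = 0 := fun y => by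
      rw [lp.coeFn_zero]; rfl
    have h1 : ∀ x, C (0 : lp (fun _ : X => ℂ) ∞) x • P x ξ = 0 := by
      intro x
      show ((0 : lp (fun _ : X => ℂ) ∞) x.1 - (0 : lp (fun _ : X => ℂ) ∞) x₀) • P x ξ = 0
      rw [hz, hz, sub_self, zero_smul]
    rw [tsum_congr h1, tsum_zero, add_zero, hz, zero_smul, ContinuousLinearMap.zero_apply]
  have hΨmul : ∀ g h, Ψ₀ (g * h) = Ψ₀ g * Ψ₀ h := by
    intro g h
    ext ξ
    have hPx : ∀ x, P x (Ψ₀ h ξ) = (h x₀ + C h x) • P x ξ := by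
      intro x
      rw [hΨ₀app, map_add, map_smul,
        P_apply_tsum P hstar hPmul hidem ξ (C h) (2 * ‖h‖) (hC h) x, add_smul]
    have e1 : ∀ x, C g x • P x (Ψ₀ h ξ) = (C g x * h x₀ + C g x * C h x) • P x ξ := by
      intro x
      rw [hPx, smul_smul, mul_add]
    have hsum1 : Summable fun x => (g x₀ * C h x) • P x ξ := by
      apply hsumm _ (‖g‖ * (2 * ‖h‖))
      intro x
      rw [norm_mul]
      exact mul_le_mul (lp.norm_apply_le_norm ENNReal.top_ne_zero g x₀) (hC h x)
        (norm_nonneg _) (norm_nonneg _)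
    have hsum2 : Summable fun x => (C g x * h x₀ + C g x * C h x) • P x ξ := by
      apply hsumm _ (2 * ‖g‖ * ‖h‖ + 2 * ‖g‖ * (2 * ‖h‖))
      intro x
      calc ‖C g x * h x₀ + C g x * C h x‖ ≤ ‖C g x * h x₀‖ + ‖C g x * C h x‖ :=
          norm_add_le _ _
      _ ≤ 2 * ‖g‖ * ‖h‖ + 2 * ‖g‖ * (2 * ‖h‖) := by
          rw [norm_mul, norm_mul]
          exact add_le_add
            (mul_le_mul (hC g x) (lp.norm_apply_le_norm ENNReal.top_ne_zero h x₀)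
              (norm_nonneg _) (by positivity))
            (mul_le_mul (hC g x) (hC h x) (norm_nonneg _) (by positivity))
    have hRHS : (Ψ₀ g * Ψ₀ h) ξ = (g x₀ * h x₀) • ξ +
        ∑' x, (g x₀ * C h x + (C g x * h x₀ + C g x * C h x)) • P x ξ := by
      calc (Ψ₀ g * Ψ₀ h) ξ = Ψ₀ g (Ψ₀ h ξ) := rfl
      _ = g x₀ • Ψ₀ h ξ + ∑' x, C g x • P x (Ψ₀ h ξ) := hΨ₀app g _
      _ = g x₀ • (h x₀ • ξ) + g x₀ • (∑' x, C h x • P x ξ) +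
          ∑' x, (C g x * h x₀ + C g x * C h x) • P x ξ := by
          rw [tsum_congr e1, hΨ₀app h ξ, smul_add]
      _ = (g x₀ * h x₀) • ξ + (∑' x, (g x₀ * C h x) • P x ξ +
          ∑' x, (C g x * h x₀ + C g x * C h x) • P x ξ) := by
          rw [smul_smul, hsmul_tsum (g x₀) (C h) (2 * ‖h‖) (hC h) ξ, add_assoc]
      _ = (g x₀ * h x₀) • ξ +
          ∑' x, (g x₀ * C h x + (C g x * h x₀ + C g x * C h x)) • P x ξ := by
          rw [← Summable.tsum_add hsum1 hsum2]
          exact congrArg _ (tsum_congr fun x => (add_smul _ _ _).symm)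
    have hLHS : Ψ₀ (g * h) ξ = (g x₀ * h x₀) • ξ +
        ∑' x, (g x₀ * C h x + (C g x * h x₀ + C g x * C h x)) • P x ξ := by
      rw [hΨ₀app]
      have h1 : ∀ x, C (g * h) x • P x ξ =
          (g x₀ * C h x + (C g x * h x₀ + C g x * C h x)) • P x ξ := by
        intro x
        have hb : C (g * h) x = g x₀ * C h x + (C g x * h x₀ + C g x * C h x) := by
          show (g * h) x.1 - (g * h) x₀ =
            g x₀ * (h x.1 - h x₀) + ((g x.1 - g x₀) * h x₀ + (g x.1 - g x₀) * (h x.1 - h x₀))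
          rw [hmul_co g h x.1, hmul_co g h x₀]; ring
        rw [hb]
      rw [tsum_congr h1, hmul_co g h x₀]
    rw [hLHS, hRHS]
  have hΨstar : ∀ g, Ψ₀ (star g) = star (Ψ₀ g) := by
    intro g
    rw [ContinuousLinearMap.star_eq_adjoint, ContinuousLinearMap.eq_adjoint_iff]
    intro ξ η
    have hCb : ∀ x, C (star g) x = starRingEnd ℂ (C g x) := by
      intro x
      show (star g) x.1 - (star g) x₀ = starRingEnd ℂ (g x.1 - g x₀)
      rw [hstar_co, hstar_co, map_sub]
    rw [hΨ₀app, hΨ₀app, inner_add_left, inner_add_right]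
    congr 1
    · rw [inner_smul_left, inner_smul_right, hstar_co g x₀, Complex.conj_conj]
    · rw [inner_tsum_left (hsumm (C (star g)) (2 * ‖star g‖) (hC (star g)) ξ) η,
        inner_tsum_right (hsummC g η) ξ]
      refine tsum_congr fun x => ?_
      rw [inner_smul_left, inner_smul_right, hCb, Complex.conj_conj,
        P_inner_move P hstar x ξ η]
  have hΨalg : ∀ r : ℂ, Ψ₀ (algebraMap ℂ (lp (fun _ : X => ℂ) ∞) r) =
      algebraMap ℂ (H →L[ℂ] H) r := by
    intro r
    rw [Algebra.algebraMap_eq_smul_one r, hΨsmul, hΨone, Algebra.algebraMap_eq_smul_one]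
  -- inclusion lemmas
  have hincl_co : ∀ (f : C(X, ℂ)) (y : X), (inclCLinf f) y = f y := fun f y => rfl
  have hincl_norm : ∀ f : C(X, ℂ), ‖inclCLinf f‖ ≤ ‖f‖ := by
    intro f
    refine lp.norm_le_of_forall_le (norm_nonneg f) fun y => ?_
    rw [hincl_co]
    exact ContinuousMap.norm_coe_le_norm f y
  have hincl_add : ∀ f₁ f₂ : C(X, ℂ), inclCLinf (f₁ + f₂) = inclCLinf f₁ + inclCLinf f₂ := by
    intro f₁ f₂
    apply lp.ext
    rw [lp.coeFn_add]
    funext y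
    rfl
  have hincl_smul : ∀ (a : ℂ) (f : C(X, ℂ)), inclCLinf (a • f) = a • inclCLinf f := by
    intro a f
    apply lp.ext
    rw [lp.coeFn_smul]
    funext y
    rfl
  have hincl_zero : inclCLinf (0 : C(X, ℂ)) = 0 := by
    apply lp.ext
    rw [lp.coeFn_zero]
    funext y
    rfl
  -- continuity of the defect map
  let L : C(X, ℂ) →ₗ[ℂ] (H →L[ℂ] H) :=
    { toFun := fun f => Ψ₀ (inclCLinf f) - ι f
      map_add' := fun f₁ f₂ => by
        show Ψ₀ (inclCLinf (f₁ + f₂)) - ι (f₁ + f₂) =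
          (Ψ₀ (inclCLinf f₁) - ι f₁) + (Ψ₀ (inclCLinf f₂) - ι f₂)
        rw [hincl_add, hΨadd, map_add]
        abel
      map_smul' := fun a f => by
        show Ψ₀ (inclCLinf (a • f)) - ι (a • f) = a • (Ψ₀ (inclCLinf f) - ι f)
        rw [hincl_smul, hΨsmul, map_smul, smul_sub] }
  have hLcont : Continuous fun f : C(X, ℂ) => Ψ₀ (inclCLinf f) - ι f := by
    have hb : ∀ f : C(X, ℂ), ‖L f‖ ≤ 4 * ‖f‖ := by
      intro f
      have h1 : ‖Ψ₀ (inclCLinf f)‖ ≤ 3 * ‖f‖ :=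
        (hΨ₀norm (inclCLinf f)).trans (by
          have := hincl_norm f
          nlinarith [norm_nonneg (inclCLinf f)])
      have h2 : ‖ι f‖ ≤ ‖f‖ := NonUnitalStarAlgHom.norm_apply_le ι f
      calc ‖Ψ₀ (inclCLinf f) - ι f‖ ≤ ‖Ψ₀ (inclCLinf f)‖ + ‖ι f‖ := norm_sub_le _ _
      _ ≤ 3 * ‖f‖ + ‖f‖ := add_le_add h1 h2
      _ = 4 * ‖f‖ := by ring
    exact AddMonoidHomClass.continuous_of_bound L 4 hb
  -- density of the span of generators
  set gens : Set C(X, ℂ) := insert 1 (Set.range e) with hgens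
  have hdense : Dense ((Submodule.span ℂ gens : Submodule ℂ C(X, ℂ)) : Set C(X, ℂ)) := by
    rw [Metric.dense_iff]
    intro f r hr
    set t : Set X := {y | r / 2 ≤ ‖f y - f x₀‖} with ht
    have htc : IsClosed t :=
      isClosed_le continuous_const ((map_continuous f).sub continuous_const).norm
    have htne : ∀ y ∈ t, y ≠ x₀ := by
      intro y hy hyx
      rw [hyx] at hy
      simp only [ht, Set.mem_setOf_eq, sub_self, norm_zero] at hy
      linarith
    have htfin : t.Finite := by
      obtain ⟨u, hu⟩ := htc.isCompact.elim_finite_subcover (fun y : t => ({y.1} : Set X))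
        (fun y => hiso y.1 (htne y.1 y.2)) (fun y hy => Set.mem_iUnion.mpr ⟨⟨y, hy⟩, rfl⟩)
      exact Set.Finite.subset (u.finite_toSet.biUnion fun i _ => Set.finite_singleton _) hu
    set s : Finset X := htfin.toFinset with hsdef
    have hsmem : ∀ y, y ∈ s ↔ y ∈ t := fun y => htfin.mem_toFinset
    set hfun : C(X, ℂ) := f x₀ • 1 + ∑ y ∈ s.attach,
      (f y.1 - f x₀) • e ⟨y.1, htne y.1 ((hsmem y.1).mp y.2)⟩ with hhfun
    have hmem : hfun ∈ Submodule.span ℂ gens := by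
      apply Submodule.add_mem
      · exact Submodule.smul_mem _ _ (Submodule.subset_span (Set.mem_insert _ _))
      · exact Submodule.sum_mem _ fun y _ => Submodule.smul_mem _ _
          (Submodule.subset_span (Set.mem_insert_of_mem _ ⟨_, rfl⟩))
    refine ⟨hfun, ?_, hmem⟩
    rw [Metric.mem_ball, dist_comm, dist_eq_norm]
    rw [ContinuousMap.norm_lt_iff _ hr]
    intro z
    rw [ContinuousMap.sub_apply]
    have hz : hfun z = f x₀ + ∑ y ∈ s.attach,
        (f y.1 - f x₀) * (if z = y.1 then 1 else 0) := by
      rw [hhfun]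
      simp only [ContinuousMap.add_apply, ContinuousMap.smul_apply, ContinuousMap.one_apply,
        smul_eq_mul, mul_one]
      congr 1
      rw [show ((∑ y ∈ s.attach, (f y.1 - f x₀) • e ⟨y.1, htne y.1 ((hsmem y.1).mp y.2)⟩) z)
        = ∑ y ∈ s.attach, ((f y.1 - f x₀) • e ⟨y.1, htne y.1 ((hsmem y.1).mp y.2)⟩) z from by
          simp]
      refine Finset.sum_congr rfl fun y _ => ?_
      rw [ContinuousMap.smul_apply, smul_eq_mul]
      rfl
    by_cases hzt : z ∈ t
    · have hsum : ∑ y ∈ s.attach, (f y.1 - f x₀) * (if z = y.1 then 1 else 0)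
          = f z - f x₀ := by
        rw [Finset.sum_eq_single (⟨z, (hsmem z).mpr hzt⟩ : {y // y ∈ s})]
        · rw [if_pos rfl, mul_one]
        · intro y _ hy
          rw [if_neg fun hzy => hy (Subtype.ext hzy.symm), mul_zero]
        · intro hmem'
          exact absurd (Finset.mem_attach _ _) hmem'
      rw [hz, hsum]
      have : f z - (f x₀ + (f z - f x₀)) = 0 := by ring
      rw [this, norm_zero]
      exact hr
    · have hsum : ∑ y ∈ s.attach, (f y.1 - f x₀) * (if z = y.1 then 1 else 0) = 0 := by
        refine Finset.sum_eq_zero fun y _ => ?_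
        rw [if_neg, mul_zero]
        intro hzy
        exact hzt (hzy ▸ (hsmem y.1).mp y.2)
      rw [hz, hsum, add_zero]
      have hlt : ¬ (r / 2 ≤ ‖f z - f x₀‖) := hzt
      push_neg at hlt
      calc ‖f z - f x₀‖ < r / 2 := hlt
      _ < r := by linarith
  -- evaluation on generators
  have hone : Ψ₀ (inclCLinf 1) = ι 1 := by
    ext ξ
    rw [hΨ₀app, map_one]
    have h1 : ∀ x, C (inclCLinf 1) x • P x ξ = 0 := by
      intro x
      show ((inclCLinf (1 : C(X, ℂ))) x.1 - (inclCLinf 1) x₀) • P x ξ = 0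
      rw [hincl_co, hincl_co]
      simp
    rw [tsum_congr h1, tsum_zero, add_zero, hincl_co]
    simp
  have hgen_e : ∀ x, Ψ₀ (inclCLinf (e x)) = ι (e x) := by
    intro x
    ext ξ
    rw [hΨ₀app]
    have hx0 : (inclCLinf (e x)) x₀ = 0 := by
      rw [hincl_co]
      exact if_neg fun hh => x.2 hh.symm
    have hterm : ∀ y, C (inclCLinf (e x)) y • P y ξ = if y = x then P x ξ else 0 := by
      intro y
      show ((inclCLinf (e x)) y.1 - (inclCLinf (e x)) x₀) • P y ξ = _
      rw [hx0, hincl_co, sub_zero]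
      show (if y.1 = x.1 then (1 : ℂ) else 0) • P y ξ = _
      by_cases hyx : y = x
      · subst hyx
        rw [if_pos rfl, one_smul, if_pos rfl]
      · rw [if_neg fun hh => hyx (Subtype.ext hh), zero_smul, if_neg hyx]
    rw [tsum_congr hterm, tsum_eq_single x fun y hy => if_neg hy, if_pos rfl, hx0, zero_smul,
      zero_add]
  -- conclusion
  have hL0 : ∀ f : C(X, ℂ), Ψ₀ (inclCLinf f) - ι f = 0 := by
    have hfun : (fun f : C(X, ℂ) => Ψ₀ (inclCLinf f) - ι f) = fun _ => (0 : H →L[ℂ] H) := by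
      refine Continuous.ext_on hdense hLcont continuous_const ?_
      intro f hf
      refine Submodule.span_induction (p := fun f _ => Ψ₀ (inclCLinf f) - ι f = 0)
        ?_ ?_ ?_ ?_ hf
      · intro f hfg
        rcases hfg with rfl | ⟨x, rfl⟩
        · show Ψ₀ (inclCLinf 1) - ι 1 = 0
          rw [hone, sub_self]
        · show Ψ₀ (inclCLinf (e x)) - ι (e x) = 0
          rw [hgen_e, sub_self]
      · show Ψ₀ (inclCLinf 0) - ι 0 = 0
        rw [hincl_zero, hΨzero, map_zero, sub_self]
      · intro a b _ _ ha hb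
        show Ψ₀ (inclCLinf (a + b)) - ι (a + b) = 0
        rw [sub_eq_zero] at ha hb ⊢
        rw [hincl_add, hΨadd, map_add, ha, hb]
      · intro a f _ hfp
        show Ψ₀ (inclCLinf (a • f)) - ι (a • f) = 0
        rw [sub_eq_zero] at hfp ⊢
        rw [hincl_smul, hΨsmul, map_smul, hfp]
    intro f
    exact congrFun hfun f
  let Ψalg : lp (fun _ : X => ℂ) ∞ →⋆ₐ[ℂ] (H →L[ℂ] H) :=
    { toFun := Ψ₀
      map_one' := hΨone
      map_mul' := hΨmul
      map_zero' := hΨzero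
      map_add' := hΨadd
      commutes' := hΨalg
      map_star' := hΨstar }
  refine ⟨Ψalg, fun f => ?_⟩
  show Ψ₀ (inclCLinf f) = ι f
  exact sub_eq_zero.mp (hL0 f)


set_option maxHeartbeats 2000000 in
/-- **Theorem (the inclusion `ℂ·1 + K(H) ⊆ B(H)` is a W*-discretization).**
If `ι : C(X) → B(H)` is an injective unital `*`-homomorphism whose range consists of
operators of the form `λ·1 + k` with `k` compact, then `ι` extends to a unital
`*`-homomorphism `Ψ : ℓ∞(X) → B(H)` along the natural inclusion `C(X) ⊆ ℓ∞(X)`. -/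
theorem stmt12 {H : Type*} [NormedAddCommGroup H] [InnerProductSpace ℂ H] [CompleteSpace H]
    {X : Type*} [TopologicalSpace X] [CompactSpace X] [T2Space X]
    (ι : C(X, ℂ) →⋆ₐ[ℂ] (H →L[ℂ] H))
    (hinj : Function.Injective ι)
    (hrange : ∀ f : C(X, ℂ), ∃ (lam : ℂ) (k : H →L[ℂ] H),
      IsCompactOperator k ∧ ι f = lam • (1 : H →L[ℂ] H) + k) :
    ∃ Ψ : lp (fun _ : X => ℂ) ∞ →⋆ₐ[ℂ] (H →L[ℂ] H),
      ∀ f : C(X, ℂ), Ψ (inclCLinf f) = ι f := by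
  classical
  rcases Classical.em (Nonempty X) with hX | hX
  swap
  · -- X is empty : the codomain is a subsingleton
    haveI hXe : IsEmpty X := not_nonempty_iff.mp hX
    haveI hsub : Subsingleton (H →L[ℂ] H) := by
      refine subsingleton_of_zero_eq_one ?_
      have h01 : (0 : C(X, ℂ)) = 1 := ContinuousMap.ext fun y => (hXe.false y).elim
      calc (0 : H →L[ℂ] H) = ι 0 := (map_zero ι).symm
      _ = ι 1 := by rw [h01]
      _ = 1 := map_one ι
    refine ⟨{ toFun := fun _ => 1
              map_one' := Subsingleton.elim _ _
              map_mul' := fun _ _ => Subsingleton.elim _ _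
              map_zero' := Subsingleton.elim _ _
              map_add' := fun _ _ => Subsingleton.elim _ _
              commutes' := fun _ => Subsingleton.elim _ _
              map_star' := fun _ => Subsingleton.elim _ _ }, fun f => Subsingleton.elim _ _⟩
  by_cases hfd : IsCompactOperator ((1 : H →L[ℂ] H) : H → H)
  · -- finite-dimensional case : X is finite and discrete
    haveI : FiniteDimensional ℂ H := by
      obtain ⟨K, hK, hmem⟩ := hfd
      have hpre : (⇑(1 : H →L[ℂ] H)) ⁻¹' K = K := by
        rw [ContinuousLinearMap.one_def, ContinuousLinearMap.coe_id', Set.preimage_id]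
      rw [hpre] at hmem
      obtain ⟨ε, hε, hball⟩ := Metric.mem_nhds_iff.mp hmem
      exact FiniteDimensional.of_isCompact_closedBall₀ ℂ (half_pos hε)
        (hK.of_isClosed_subset Metric.isClosed_closedBall
          ((Metric.closedBall_subset_ball (half_lt_self hε)).trans hball))
    haveI : FiniteDimensional ℂ (H →L[ℂ] H) :=
      FiniteDimensional.of_injective (ContinuousLinearMap.coeLM ℂ :
        (H →L[ℂ] H) →ₗ[ℂ] (H →ₗ[ℂ] H)) ContinuousLinearMap.coe_injective
    haveI : FiniteDimensional ℂ C(X, ℂ) :=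
      FiniteDimensional.of_injective (ι.toAlgHom.toLinearMap) hinj
    haveI hXfin : Finite X := by
      by_contra hXinf
      rw [not_finite_iff_infinite] at hXinf
      set n := Module.finrank ℂ C(X, ℂ) + 1 with hn
      let emb : Fin n ↪ X := (Fin.valEmbedding).trans (Infinite.natEmbedding X)
      have hbump : ∀ i : Fin n, ∃ f : C(X, ℂ), f (emb i) = 1 ∧
          ∀ j : Fin n, j ≠ i → f (emb j) = 0 := by
        intro i
        have hTfin : Set.Finite ((fun j : Fin n => emb j) '' {j | j ≠ i}) :=
          Set.toFinite _
        have hdisj : Disjoint ((fun j : Fin n => emb j) '' {j | j ≠ i}) {emb i} := by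
          rw [Set.disjoint_singleton_right]
          rintro ⟨j, hj, hji⟩
          exact hj (emb.injective hji)
        obtain ⟨f0, hf0, hf1, _⟩ := exists_continuous_zero_one_of_isClosed
          hTfin.isClosed isClosed_singleton hdisj
        refine ⟨⟨fun y => (f0 y : ℂ), Complex.continuous_ofReal.comp f0.continuous⟩, ?_, ?_⟩
        · have := hf1 (Set.mem_singleton _)
          simp only [ContinuousMap.coe_mk]
          rw [show f0 (emb i) = 1 from this]
          norm_num
        · intro j hj
          have := hf0 ⟨j, hj, rfl⟩
          simp only [ContinuousMap.coe_mk]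
          rw [show f0 (emb j) = 0 from this]
          norm_num
      choose F hF1 hF0 using hbump
      have hli : LinearIndependent ℂ F := by
        rw [linearIndependent_iff']
        intro s g hsum i hi
        have happ := congrArg (fun f : C(X, ℂ) => f (emb i)) hsum
        simp only [ContinuousMap.zero_apply] at happ
        rw [show (∑ j ∈ s, g j • F j) (emb i) = ∑ j ∈ s, g j * F j (emb i) from by simp]
          at happ
        rw [Finset.sum_eq_single i
          (fun j _ hne => by rw [hF0 j i (Ne.symm hne), mul_zero])
          (fun h => absurd hi h)] at happ
        rw [hF1 i, mul_one] at happ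
        exact happ
      have hcard := hli.fintype_card_le_finrank
      simp only [Fintype.card_fin] at hcard
      omega
    obtain ⟨x₀⟩ := hX
    exact construction ι x₀ fun x _ => isOpen_discrete _
  · -- infinite-dimensional case
    choose lam kc hkc hdecomp using hrange
    have hui : ∀ f : C(X, ℂ), IsCompactOperator ⇑(ι f - lam f • (1 : H →L[ℂ] H)) := by
      intro f
      have h : ι f - lam f • (1 : H →L[ℂ] H) = kc f := by rw [hdecomp f]; abel
      rw [h]; exact hkc f
    have hcompmul : ∀ (A : H →L[ℂ] H) (B : H →L[ℂ] H), IsCompactOperator ⇑B →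
        IsCompactOperator ⇑(A * B) := by
      intro A B hB
      have : ⇑(A * B) = ⇑A ∘ ⇑B := rfl
      rw [this]
      exact hB.continuous_comp A.continuous
    have hx0 : ∃ x₀ : X, ∀ f : C(X, ℂ), f x₀ = lam f := by
      by_contra hcon
      push_neg at hcon
      have hZc : ∀ f : C(X, ℂ), IsClosed {x | f x = lam f} := fun f =>
        isClosed_eq (map_continuous f) continuous_const
      have hempty : (Set.univ : Set X) ∩ ⋂ f : C(X, ℂ), {x | f x = lam f} = ∅ := by
        rw [Set.univ_inter]
        ext x
        simp only [Set.mem_iInter, Set.mem_setOf_eq, Set.mem_empty_iff_false, iff_false]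
        intro hall
        obtain ⟨f, hf⟩ := hcon x
        exact hf (hall f)
      obtain ⟨t, ht⟩ := isCompact_univ.elim_finite_subfamily_closed _ hZc hempty
      set g : C(X, ℂ) := ∑ f ∈ t, star (f - lam f • 1) * (f - lam f • 1) with hg
      have hgc : IsCompactOperator ⇑(ι g) := by
        rw [hg, map_sum]
        refine Finset.sum_induction _ (fun T : H →L[ℂ] H => IsCompactOperator ⇑T) ?_ ?_ ?_
        · intro a b ha hb
          have hco : ⇑(a + b) = ⇑a + ⇑b := rfl
          rw [hco]
          exact ha.add hb
        · exact isCompactOperator_zero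
        · intro f _
          rw [map_mul]
          apply hcompmul
          have hsub : ι (f - lam f • 1) = ι f - lam f • (1 : H →L[ℂ] H) := by
            rw [map_sub, map_smul, map_one]
          rw [hsub]
          exact hui f
      have hnz : ∀ x : X, g x ≠ 0 := by
        intro x hx
        have hre : (g x).re = ∑ f ∈ t, Complex.normSq (f x - lam f) := by
          rw [hg]
          rw [show ((∑ f ∈ t, star (f - lam f • 1) * (f - lam f • 1)) x)
            = ∑ f ∈ t, (star (f - lam f • 1) * (f - lam f • 1)) x from by simp]
          rw [Complex.re_sum]
          refine Finset.sum_congr rfl fun f _ => ?_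
          have hterm : (star (f - lam f • 1) * (f - lam f • 1)) x
              = starRingEnd ℂ (f x - lam f) * (f x - lam f) := by
            simp [ContinuousMap.mul_apply, ContinuousMap.star_apply, ContinuousMap.sub_apply,
              ContinuousMap.smul_apply, ContinuousMap.one_apply, smul_eq_mul, mul_one]
          rw [hterm, show starRingEnd ℂ (f x - lam f) * (f x - lam f)
            = (Complex.normSq (f x - lam f) : ℂ) from by rw [mul_comm, Complex.mul_conj],
            Complex.ofReal_re]
        have hxmem : x ∉ ⋂ f ∈ t, {y : X | f y = lam f} := by
          intro hmem
          have hxx : x ∈ (Set.univ : Set X) ∩ ⋂ f ∈ t, {y | f y = lam f} := ⟨trivial, hmem⟩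
          rw [ht] at hxx
          exact hxx
        rw [Set.mem_iInter₂] at hxmem
        push_neg at hxmem
        obtain ⟨f, hft, hfx⟩ := hxmem
        have hpos : 0 < (g x).re := by
          rw [hre]
          refine Finset.sum_pos' (fun f _ => Complex.normSq_nonneg _) ⟨f, hft, ?_⟩
          exact Complex.normSq_pos.mpr (sub_ne_zero.mpr hfx)
        rw [hx] at hpos
        simp at hpos
      set ginv : C(X, ℂ) := ⟨fun x => (g x)⁻¹, ((map_continuous g).inv₀ hnz)⟩ with hginv
      have hmul1 : ginv * g = 1 := ContinuousMap.ext fun x => by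
        simp only [ContinuousMap.mul_apply, ContinuousMap.one_apply, hginv,
          ContinuousMap.coe_mk]
        exact inv_mul_cancel₀ (hnz x)
      apply hfd
      have h1 : (1 : H →L[ℂ] H) = ι ginv * ι g := by
        rw [← map_mul, hmul1, map_one]
      rw [h1]
      exact hcompmul _ _ hgc
    obtain ⟨x₀, hx₀⟩ := hx0
    have hiso : ∀ x : X, x ≠ x₀ → IsOpen ({x} : Set X) := by
      intro x hx
      by_contra hnotopen
      have hacc : ∀ U : Set X, IsOpen U → x ∈ U → ∃ z ∈ U, z ≠ x := by
        intro U hUopen hxU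
        by_contra hno
        push_neg at hno
        apply hnotopen
        have : U = {x} := Set.eq_singleton_iff_unique_mem.mpr ⟨hxU, hno⟩
        rw [← this]
        exact hUopen
      obtain ⟨f0, hf00, hf01, hf0r⟩ := exists_continuous_zero_one_of_isClosed
        (isClosed_singleton (x := x₀)) (isClosed_singleton (x := x))
        (by rw [Set.disjoint_singleton]; exact Ne.symm hx)
      set fC : C(X, ℂ) := ⟨fun y => ((f0 y : ℝ) : ℂ),
        Complex.continuous_ofReal.comp f0.continuous⟩ with hfC
      have hfc0 : lam fC = 0 := by
        rw [← hx₀ fC]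
        show ((f0 x₀ : ℝ) : ℂ) = 0
        have : f0 x₀ = 0 := hf00 (Set.mem_singleton _)
        rw [this, Complex.ofReal_zero]
      have hfCc : IsCompactOperator ⇑(ι fC) := by
        have h := hui fC
        rw [hfc0, zero_smul, sub_zero] at h
        exact h
      set V : Set X := {y | 1/2 < f0 y} with hV
      have hVopen : IsOpen V := isOpen_lt continuous_const f0.continuous
      have hxV : x ∈ V := by
        have : f0 x = 1 := hf01 (Set.mem_singleton _)
        show 1/2 < f0 x
        rw [this]; norm_num
      -- one separation step
      have hstep : ∀ U : Set X, IsOpen U → x ∈ U → ∃ (z : X) (W Unext : Set X),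
          IsOpen W ∧ z ∈ W ∧ W ⊆ U ∧ IsOpen Unext ∧ x ∈ Unext ∧ Unext ⊆ U ∧
          ∀ y ∈ Unext, y ∉ W := by
        intro U hU hxU
        obtain ⟨z, hzU, hzx⟩ := hacc U hU hxU
        have hclosed : IsClosed (Uᶜ ∪ {x}) := hU.isClosed_compl.union isClosed_singleton
        have hdisj : Disjoint ({z} : Set X) (Uᶜ ∪ {x}) := by
          rw [Set.disjoint_left]
          rintro y rfl
          rintro (hy | hy)
          · exact hy hzU
          · exact hzx hy
        obtain ⟨A, B, hA, hB, hzA, hUB, hAB⟩ := normal_separation isClosed_singleton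
          hclosed hdisj
        refine ⟨z, A ∩ U, U ∩ B, hA.inter hU, ⟨hzA rfl, hzU⟩, Set.inter_subset_right,
          hU.inter hB, ⟨hxU, hUB (Or.inr rfl)⟩, Set.inter_subset_left, ?_⟩
        intro y hy hyW
        exact Set.disjoint_left.mp hAB hyW.1 hy.2
      choose zf Wf Uf hWo hzW hWU hUo hxUn hUU hdj using hstep
      let Useq : ℕ → {p : Set X // IsOpen p ∧ x ∈ p ∧ p ⊆ V} := fun n =>
        Nat.rec (motive := fun _ => {p : Set X // IsOpen p ∧ x ∈ p ∧ p ⊆ V})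
          ⟨V, hVopen, hxV, subset_rfl⟩
          (fun _ Up => ⟨Uf Up.1 Up.2.1 Up.2.2.1,
            hUo Up.1 Up.2.1 Up.2.2.1, hxUn Up.1 Up.2.1 Up.2.2.1,
            (hUU Up.1 Up.2.1 Up.2.2.1).trans Up.2.2.2⟩) n
      let U' : ℕ → Set X := fun n => (Useq n).1
      let z' : ℕ → X := fun n => zf (U' n) (Useq n).2.1 (Useq n).2.2.1
      let W' : ℕ → Set X := fun n => Wf (U' n) (Useq n).2.1 (Useq n).2.2.1
      have hW'o : ∀ n, IsOpen (W' n) := fun n => hWo _ _ _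
      have hz'W : ∀ n, z' n ∈ W' n := fun n => hzW _ _ _
      have hW'U : ∀ n, W' n ⊆ U' n := fun n => hWU _ _ _
      have hdisjnext : ∀ n, ∀ y ∈ U' (n + 1), y ∉ W' n := fun n => hdj _ _ _
      have hmono : ∀ n m, n ≤ m → U' m ⊆ U' n := by
        intro n m hnm
        induction m, hnm using Nat.le_induction with
        | base => exact subset_rfl
        | succ m hnm ih => exact (hUU (U' m) _ _).trans ih
      have hWdisj : ∀ i j : ℕ, i ≠ j → ∀ y, y ∈ W' i → y ∉ W' j := by
        have key : ∀ i j, i < j → ∀ y, y ∈ W' j → y ∉ W' i := by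
          intro i j hij y hyj
          exact hdisjnext i y (hmono (i + 1) j hij (hW'U j hyj))
        intro i j hij y hyi hyj
        rcases lt_or_gt_of_ne hij with h | h
        · exact key i j h y hyj hyi
        · exact key j i h y hyi hyj
      have hW'V : ∀ n, W' n ⊆ V := fun n => (hW'U n).trans (Useq n).2.2.2
      -- bump functions
      have hbump : ∀ n : ℕ, ∃ g : C(X, ℝ), (∀ y, y ∉ W' n → g y = 0) ∧ g (z' n) = 1 ∧
          ∀ y, g y ∈ Set.Icc (0:ℝ) 1 := by
        intro n
        obtain ⟨g, hg0, hg1, hgr⟩ := exists_continuous_zero_one_of_isClosed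
          (hW'o n).isClosed_compl isClosed_singleton
          (Set.disjoint_left.mpr fun y hy hz => by
            rw [Set.mem_singleton_iff] at hz
            exact hy (hz ▸ hz'W n))
        exact ⟨g, fun y hy => hg0 hy, hg1 (Set.mem_singleton _), hgr⟩
      choose g0 hg0out hg0z hg0r using hbump
      let gC : ℕ → C(X, ℂ) := fun n =>
        ⟨fun y => ((g0 n y : ℝ) : ℂ), Complex.continuous_ofReal.comp (g0 n).continuous⟩
      have hgC_apply : ∀ n y, gC n y = ((g0 n y : ℝ) : ℂ) := fun n y => rfl
      have hgmul0 : ∀ i j, i ≠ j → star (gC i) * gC j = 0 := by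
        intro i j hij
        refine ContinuousMap.ext fun y => ?_
        simp only [ContinuousMap.mul_apply, ContinuousMap.star_apply, hgC_apply,
          ContinuousMap.zero_apply, Complex.star_def, Complex.conj_ofReal]
        by_cases hy : y ∈ W' i
        · rw [hg0out j y (hWdisj i j hij y hy), Complex.ofReal_zero, mul_zero]
        · rw [hg0out i y hy, Complex.ofReal_zero, zero_mul]
      have hgCne : ∀ n, gC n ≠ 0 := by
        intro n h
        have := congrArg (fun q : C(X, ℂ) => q (z' n)) h
        simp only [hgC_apply, ContinuousMap.zero_apply] at this
        rw [hg0z n] at this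
        simp at this
      -- inner product moves
      have hinner_move : ∀ (a : C(X, ℂ)) (u w : H), ⟪ι (star a) u, w⟫_ℂ = ⟪u, ι a w⟫_ℂ := by
        intro a u w
        rw [map_star, ContinuousLinearMap.star_eq_adjoint]
        exact ContinuousLinearMap.adjoint_inner_left (ι a) w u
      have hinner_move' : ∀ (a : C(X, ℂ)) (u w : H), ⟪ι a u, w⟫_ℂ = ⟪u, ι (star a) w⟫_ℂ := by
        intro a u w
        have := hinner_move (star a) u w
        rwa [star_star] at this
      -- positivity of the compression
      have hq : ∀ n : ℕ, ∃ v : C(X, ℂ),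
          star (gC n) * ((fC - (1/2 : ℂ) • 1) * gC n) = star v * v := by
        intro n
        have hwcont : Continuous fun y => Real.sqrt ((g0 n y)^2 * (f0 y - 1/2)) :=
          Real.continuous_sqrt.comp ((((g0 n).continuous.pow 2)).mul
            (f0.continuous.sub continuous_const))
        set w : C(X, ℝ) := ⟨fun y => Real.sqrt ((g0 n y)^2 * (f0 y - 1/2)), hwcont⟩ with hw
        have hnn : ∀ y, 0 ≤ (g0 n y)^2 * (f0 y - 1/2) := by
          intro y
          by_cases hy : y ∈ W' n
          · have h1 : 1/2 < f0 y := hW'V n hy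
            nlinarith [sq_nonneg (g0 n y)]
          · rw [hg0out n y hy]
            norm_num
        refine ⟨⟨fun y => ((w y : ℝ) : ℂ), Complex.continuous_ofReal.comp w.continuous⟩, ?_⟩
        refine ContinuousMap.ext fun y => ?_
        simp only [ContinuousMap.mul_apply, ContinuousMap.star_apply, ContinuousMap.sub_apply,
          ContinuousMap.smul_apply, ContinuousMap.one_apply, ContinuousMap.coe_mk, hgC_apply,
          smul_eq_mul, mul_one, Complex.star_def, Complex.conj_ofReal, hfC]
        have hw2 : (w y) * (w y) = (g0 n y)^2 * (f0 y - 1/2) := Real.mul_self_sqrt (hnn y)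
        rw [show ((w y : ℝ) : ℂ) * ((w y : ℝ) : ℂ) = (((w y) * (w y) : ℝ) : ℂ) from by
          push_cast; ring, hw2]
        push_cast
        ring
      -- lower bound for compressions
      have hlow : ∀ (n : ℕ) (ξ : H),
          1/2 * ‖ι (gC n) ξ‖^2 ≤ (⟪ι fC (ι (gC n) ξ), ι (gC n) ξ⟫_ℂ).re := by
        intro n ξ
        obtain ⟨v, hv⟩ := hq n
        have hdecompq : star (gC n) * (fC * gC n) =
            star (gC n) * ((fC - (1/2 : ℂ) • 1) * gC n) + (1/2 : ℂ) • (star (gC n) * gC n) := by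
          rw [Algebra.smul_def, Algebra.smul_def]
          ring
        have hkey1 : ⟪ι fC (ι (gC n) ξ), ι (gC n) ξ⟫_ℂ = ⟪ι (star (gC n) * (fC * gC n)) ξ, ξ⟫_ℂ := by
          rw [map_mul, map_mul]
          have happ : (ι (star (gC n)) * (ι fC * ι (gC n))) ξ
              = ι (star (gC n)) (ι fC (ι (gC n) ξ)) := rfl
          rw [happ, hinner_move]
        have hkey2 : ⟪ι (star v * v) ξ, ξ⟫_ℂ = ((‖ι v ξ‖ : ℂ))^2 := by
          rw [map_mul]
          have happ : (ι (star v) * ι v) ξ = ι (star v) (ι v ξ) := rfl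
          rw [happ, hinner_move]
          exact inner_self_eq_norm_sq_to_K _
        have hkey3 : ⟪ι (star (gC n) * gC n) ξ, ξ⟫_ℂ = ((‖ι (gC n) ξ‖ : ℂ))^2 := by
          rw [map_mul]
          have happ : (ι (star (gC n)) * ι (gC n)) ξ = ι (star (gC n)) (ι (gC n) ξ) := rfl
          rw [happ, hinner_move]
          exact inner_self_eq_norm_sq_to_K _
        have hcalc : ⟪ι fC (ι (gC n) ξ), ι (gC n) ξ⟫_ℂ
            = ((‖ι v ξ‖ : ℂ))^2 + (1/2 : ℂ) * ((‖ι (gC n) ξ‖ : ℂ))^2 := by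
          rw [hkey1, hdecompq, hv, map_add, map_smul, ContinuousLinearMap.add_apply,
            ContinuousLinearMap.smul_apply, inner_add_left, inner_smul_left, hkey2, hkey3]
          congr 1
          rw [show (starRingEnd ℂ) (1/2 : ℂ) = (1/2 : ℂ) from by
            rw [show (1/2 : ℂ) = ((1/2 : ℝ) : ℂ) from by norm_num, Complex.conj_ofReal]]
        have hre : (⟪ι fC (ι (gC n) ξ), ι (gC n) ξ⟫_ℂ).re
            = ‖ι v ξ‖^2 + 1/2 * ‖ι (gC n) ξ‖^2 := by
          rw [hcalc]
          rw [show ((‖ι v ξ‖ : ℂ))^2 + (1/2 : ℂ) * ((‖ι (gC n) ξ‖ : ℂ))^2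
            = (((‖ι v ξ‖^2 + 1/2 * ‖ι (gC n) ξ‖^2 : ℝ)) : ℂ) from by push_cast; ring]
          rw [Complex.ofReal_re]
        rw [hre]
        nlinarith [sq_nonneg ‖ι v ξ‖]
      -- unit vectors
      have hgne : ∀ n : ℕ, ∃ ξ : H, ι (gC n) ξ ≠ 0 := by
        intro n
        by_contra hno
        push_neg at hno
        have hzero : ι (gC n) = 0 := ContinuousLinearMap.ext fun ξ => hno ξ
        have : gC n = 0 := hinj (by rw [hzero, map_zero])
        exact hgCne n this
      choose ξsel hξsel using hgne
      let u : ℕ → H := fun n => ι (gC n) (ξsel n)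
      have hune : ∀ n, u n ≠ 0 := hξsel
      have hunorm : ∀ n, ‖u n‖ ≠ 0 := fun n => norm_ne_zero_iff.mpr (hune n)
      let c : ℕ → ℂ := fun n => ((‖u n‖⁻¹ : ℝ) : ℂ)
      let η : ℕ → H := fun n => c n • u n
      have hηnorm : ∀ n, ‖η n‖ = 1 := by
        intro n
        show ‖c n • u n‖ = 1
        rw [norm_smul]
        have : ‖c n‖ = ‖u n‖⁻¹ := by
          show ‖((‖u n‖⁻¹ : ℝ) : ℂ)‖ = ‖u n‖⁻¹
          rw [Complex.norm_real]
          exact abs_of_nonneg (inv_nonneg.mpr (norm_nonneg _))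
        rw [this]
        exact inv_mul_cancel₀ (hunorm n)
      have huinner : ∀ i j, i ≠ j → ⟪u i, u j⟫_ℂ = 0 := by
        intro i j hij
        show ⟪ι (gC i) (ξsel i), ι (gC j) (ξsel j)⟫_ℂ = 0
        rw [hinner_move']
        have : ι (star (gC i)) (ι (gC j) (ξsel j)) = ι (star (gC i) * gC j) (ξsel j) := by
          rw [map_mul]; rfl
        rw [this, hgmul0 i j hij, map_zero]
        simp
      have horth : Orthonormal ℂ η := by
        rw [orthonormal_iff_ite]
        intro i j
        by_cases hij : i = j
        · subst hij
          rw [if_pos rfl]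
          show ⟪c i • u i, c i • u i⟫_ℂ = 1
          rw [inner_smul_left, inner_smul_right, inner_self_eq_norm_sq_to_K]
          show (starRingEnd ℂ) ((‖u i‖⁻¹ : ℝ) : ℂ) * (((‖u i‖⁻¹ : ℝ) : ℂ) * (‖u i‖ : ℂ)^2) = 1
          rw [Complex.conj_ofReal]
          have hcast : ((‖u i‖ : ℝ) : ℂ) ≠ 0 := Complex.ofReal_ne_zero.mpr (hunorm i)
          push_cast
          field_simp
        · rw [if_neg hij]
          show ⟪c i • u i, c j • u j⟫_ℂ = 0
          rw [inner_smul_left, inner_smul_right, huinner i j hij]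
          ring
      have hlow' : ∀ n, 1/2 ≤ (⟪ι fC (η n), η n⟫_ℂ).re := by
        intro n
        have hmap : ι fC (η n) = c n • ι fC (u n) := by
          show ι fC (c n • u n) = c n • ι fC (u n)
          exact map_smul _ _ _
        have hinner : ⟪ι fC (η n), η n⟫_ℂ
            = ((‖u n‖⁻¹ * ‖u n‖⁻¹ : ℝ) : ℂ) * ⟪ι fC (u n), u n⟫_ℂ := by
          rw [hmap]
          show ⟪c n • ι fC (u n), c n • u n⟫_ℂ = _
          rw [inner_smul_left, inner_smul_right]
          show (starRingEnd ℂ) ((‖u n‖⁻¹ : ℝ) : ℂ) * (((‖u n‖⁻¹ : ℝ) : ℂ) * _) = _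
          rw [Complex.conj_ofReal]
          push_cast
          ring
        have hre : (⟪ι fC (η n), η n⟫_ℂ).re
            = (‖u n‖⁻¹ * ‖u n‖⁻¹) * (⟪ι fC (u n), u n⟫_ℂ).re := by
          rw [hinner, Complex.re_ofReal_mul]
        rw [hre]
        have h1 := hlow n (ξsel n)
        have h2 : (0:ℝ) < ‖u n‖ := lt_of_le_of_ne (norm_nonneg _) (Ne.symm (hunorm n))
        have h3 : ‖u n‖⁻¹ * ‖u n‖⁻¹ * (1/2 * ‖u n‖^2) = 1/2 := by
          field_simp
        have h4 : ‖u n‖⁻¹ * ‖u n‖⁻¹ * (1/2 * ‖u n‖^2)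
            ≤ ‖u n‖⁻¹ * ‖u n‖⁻¹ * (⟪ι fC (u n), u n⟫_ℂ).re := by
          apply mul_le_mul_of_nonneg_left h1
          positivity
        linarith
      -- compactness contradiction
      obtain ⟨K, hKc, hKs⟩ := IsCompactOperator.image_closedBall_subset_compact
        (f := ((ι fC : H →L[ℂ] H) : H →ₗ[ℂ] H)) hfCc 1
      have hKmem : ∀ n, ι fC (η n) ∈ K := by
        intro n
        apply hKs
        refine ⟨η n, ?_, rfl⟩
        rw [Metric.mem_closedBall, dist_zero_right, hηnorm n]
      obtain ⟨w, hwK, φ, hφ, hφt⟩ := hKc.tendsto_subseq hKmem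
      have hb1 : Filter.Tendsto (fun n : ℕ => ‖⟪η n, w⟫_ℂ‖^2) Filter.atTop (nhds 0) :=
        (horth.inner_products_summable (x := w)).tendsto_atTop_zero
      have hb2 : Filter.Tendsto (fun n : ℕ => ‖⟪η n, w⟫_ℂ‖) Filter.atTop (nhds 0) := by
        have hcomp := (Real.continuous_sqrt.tendsto 0).comp hb1
        rw [Real.sqrt_zero] at hcomp
        have heq : (Real.sqrt ∘ fun n : ℕ => ‖⟪η n, w⟫_ℂ‖^2)
            = fun n : ℕ => ‖⟪η n, w⟫_ℂ‖ := by
          funext n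
          exact Real.sqrt_sq (norm_nonneg _)
        rwa [heq] at hcomp
      have hbound : ∀ j, ‖(⟪ι fC (η (φ j)), η (φ j)⟫_ℂ).re‖
          ≤ ‖ι fC (η (φ j)) - w‖ + ‖⟪η (φ j), w⟫_ℂ‖ := by
        intro j
        have hsplit : ⟪ι fC (η (φ j)), η (φ j)⟫_ℂ
            = ⟪ι fC (η (φ j)) - w, η (φ j)⟫_ℂ + ⟪w, η (φ j)⟫_ℂ := by
          rw [inner_sub_left]
          ring
        calc ‖(⟪ι fC (η (φ j)), η (φ j)⟫_ℂ).re‖ ≤ ‖⟪ι fC (η (φ j)), η (φ j)⟫_ℂ‖ := by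
              rw [Real.norm_eq_abs]
              exact Complex.abs_re_le_norm _
        _ = ‖⟪ι fC (η (φ j)) - w, η (φ j)⟫_ℂ + ⟪w, η (φ j)⟫_ℂ‖ := by rw [← hsplit]
        _ ≤ ‖⟪ι fC (η (φ j)) - w, η (φ j)⟫_ℂ‖ + ‖⟪w, η (φ j)⟫_ℂ‖ := norm_add_le _ _
        _ ≤ ‖ι fC (η (φ j)) - w‖ * ‖η (φ j)‖ + ‖⟪w, η (φ j)⟫_ℂ‖ :=
            add_le_add (norm_inner_le_norm _ _) le_rfl
        _ = ‖ι fC (η (φ j)) - w‖ + ‖⟪η (φ j), w⟫_ℂ‖ := by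
            rw [hηnorm (φ j), mul_one, ← inner_conj_symm (η (φ j)) w, RCLike.norm_conj]
      have hg0lim : Filter.Tendsto (fun j => ‖ι fC (η (φ j)) - w‖ + ‖⟪η (φ j), w⟫_ℂ‖)
          Filter.atTop (nhds 0) := by
        have t1 : Filter.Tendsto (fun j => ‖ι fC (η (φ j)) - w‖) Filter.atTop (nhds 0) := by
          have ht := (hφt.sub (tendsto_const_nhds (x := w))).norm
          simp only [sub_self, norm_zero] at ht
          exact ht
        have t2 : Filter.Tendsto (fun j => ‖⟪η (φ j), w⟫_ℂ‖) Filter.atTop (nhds 0) :=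
          hb2.comp (hφ.tendsto_atTop)
        have := t1.add t2
        simpa using this
      have hzero : Filter.Tendsto (fun j => (⟪ι fC (η (φ j)), η (φ j)⟫_ℂ).re)
          Filter.atTop (nhds 0) := squeeze_zero_norm hbound hg0lim
      have hfin := ge_of_tendsto hzero (Filter.Eventually.of_forall fun j => hlow' (φ j))
      linarith
    exact construction ι x₀ hiso
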